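/- Let a > b > 0, δ = √(a⁴ − a²b² + b⁴), c² = a² − b², J = √(2δ − a² − b²)/c², and L = 2(δ + a² + b²)·J. Then ((a² + b² + δ)/(ab)^{4/3})³ = 2·J³·L/(J·L − 4)². -/

import Mathlib

/-- The `N = 3` invariant `k₁₁₉ = (a² + b² + δ)/(ab)^{4/3}` satisfies
`k₁₁₉³ = 2J³L/(JL − 4)²`. -/
theorem n3_k119 (a b c : ℝ) (hab : a > b) (hb : b > 0)
    (hc : c > 0) (hc2 : c^2 = a^2 - b^2) :
    let δ := Real.sqrt (a^4 - a^2*b^2 + b^4)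
    let J := Real.sqrt (2*δ - a^2 - b^2) / c^2
    let L := 2*(δ + a^2 + b^2) * J
    ((a^2 + b^2 + δ) / (a*b) ^ ((4:ℝ)/3))^3 = 2*J^3*L/(J*L - 4)^2 := by
  intro δ J L
  have ha : a > 0 := lt_trans hb hab
  have hab2 : a^2 > b^2 := by nlinarith
  have hab' : (0:ℝ) < a*b := mul_pos ha hb
  have hA : (0:ℝ) < a^4 - a^2*b^2 + b^4 := by nlinarith [sq_nonneg (a^2-b^2)]
  have hδpos : (0:ℝ) < δ := Real.sqrt_pos.mpr hA
  have hδ2 : δ^2 = a^4 - a^2*b^2 + b^4 := Real.sq_sqrt hA.le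
  have h2δ : (0:ℝ) < 2*δ - a^2 - b^2 := by
    nlinarith [hδ2, hδpos, mul_pos (sub_pos.mpr hab2) (sub_pos.mpr hab2)]
  set u := Real.sqrt (2*δ - a^2 - b^2) with hu_def
  have hu : (0:ℝ) < u := Real.sqrt_pos.mpr h2δ
  have hu2 : u^2 = 2*δ - a^2 - b^2 := Real.sq_sqrt h2δ.le
  have hu4 : u^4 = (2*δ - a^2 - b^2)^2 := by
    linear_combination (u^2 + 2*δ - a^2 - b^2) * hu2
  have hc0 : (c:ℝ)^2 ≠ 0 := by positivity
  have hJ : J = u/c^2 := rfl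
  have hL : L = 2*(δ + a^2 + b^2) * J := rfl
  set X := δ*(a^2+b^2) - (a^2+b^2)^2 + 2*a^2*b^2 with hX_def
  have hprod : (a^2+b^2+δ) * X = a^2*b^2*(2*δ - a^2 - b^2) := by
    rw [hX_def]; linear_combination (a^2+b^2) * hδ2
  have hXpos : (0:ℝ) < X := by
    nlinarith [hprod, mul_pos (mul_pos (pow_pos ha 2) (pow_pos hb 2)) h2δ,
      hδpos, sq_nonneg (a+b)]
  have hX0 : X ≠ 0 := ne_of_gt hXpos
  have hJL : J*L - 4 = 2*X/c^4 := by
    rw [hJ, hL, hJ]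
    field_simp
    linear_combination 2*(δ+a^2+b^2)*hu2 + 4*hδ2 - 4*(c^2+a^2-b^2)*hc2 - 2*hX_def
  have hJL4 : J*L - 4 ≠ 0 := by rw [hJL]; positivity
  have hpow : ((a*b) ^ ((4:ℝ)/3))^(3:ℕ) = (a*b)^(4:ℕ) := by
    rw [← Real.rpow_natCast ((a*b) ^ ((4:ℝ)/3)) 3, ← Real.rpow_mul hab'.le,
      show ((4:ℝ)/3)*(3:ℕ) = ((4:ℕ):ℝ) by norm_num, Real.rpow_natCast]
  have hRHS : 2*J^3*L/(J*L - 4)^2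
      = (2*δ-a^2-b^2)^2*(a^2+b^2+δ)/X^2 := by
    rw [hJL, hJ, hL, hJ]
    field_simp
    linear_combination (δ+a^2+b^2)*hu4
  rw [hRHS, div_pow, hpow]
  rw [div_eq_div_iff (by positivity) (by positivity)]
  linear_combination (a^2+b^2+δ) * ((a^2+b^2+δ)*X + a^2*b^2*(2*δ-a^2-b^2)) * hprod
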